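/- Let 0 ≤ t < 1 and let (f_i : S_i × X_i → N_i)_{i≥1} be a sequence of biregular irreducible functions with regularity sets M_i such that |X_i| → ∞, lim_{i→∞} (log|M_i|)/(log|X_i|) = 1 − t, and liminf_{i→∞} [min_{m∈M_i} (−log λ₂(f_i,m))] / (log|X_i|) ≥ t. Then the limit lim_{i→∞} [min_{m∈M_i} (−log λ₂(f_i,m))] / (log|X_i|) exists and equals t. -/

import Mathlib

open MeasureTheory Filter
open scoped ENNReal

noncomputable section
/-- The second-largest eigenvalue modulus of a real matrix `P` (intended: symmetric with
row sums `1`, so that its characteristic polynomial splits over `ℝ` and the largest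
eigenvalue has the all-ones eigenvector): the eigenvalues of `P` with multiplicity are the
roots of its characteristic polynomial; we sort them increasingly, drop (one copy of) the
largest one, and take the maximum modulus of the remaining ones.  For eigenvalues
`μ₁ ≥ μ₂ ≥ ... ≥ μ_n` this is `max (|μ₂|, |μ_n|)`. -/
def secondEVmod {n : Type*} [Fintype n] [DecidableEq n] (P : Matrix n n ℝ) : ℝ :=
  ((P.charpoly.roots.sort (· ≤ ·)).dropLast.map (fun μ => |μ|)).foldr max 0

/-- The symmetric stochastic matrix `P_{f,m}` associated with `f : S × X → N` and a
message `m`, with `(x,x')` entry `|{s : f(s,x) = f(s,x') = m}| / (d_S · d_X)`. -/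
def briMatrix {S X N : Type*} [Fintype S] [DecidableEq N]
    (f : S → X → N) (m : N) (dS dX : ℕ) : Matrix X X ℝ :=
  Matrix.of fun x x' =>
    ((Finset.univ.filter fun s : S => f s x = m ∧ f s x' = m).card : ℝ) / (dS * dX)

/-- `λ₂(f,m)`: the second-largest eigenvalue modulus of the matrix `P_{f,m}`. -/
def lam2 {S X N : Type*} [Fintype S] [Fintype X] [DecidableEq X] [DecidableEq N]
    (f : S → X → N) (m : N) (dS dX : ℕ) : ℝ :=
  secondEVmod (briMatrix f m dS dX)

/-- `f : S × X → N` is a biregular irreducible function with regularity set `M` and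
degrees `(d_S, d_X)` (positive integers): for every `m ∈ M`, every `s` has exactly `d_S`
preimages `x` with `f(s,x) = m`, every `x` has exactly `d_X` preimages `s` with
`f(s,x) = m`, and the matrix `P_{f,m}` has second-largest eigenvalue modulus `< 1`. -/
structure IsBRI {S X N : Type*} [Fintype S] [Fintype X] [DecidableEq X] [DecidableEq N]
    (f : S → X → N) (M : Set N) (dS dX : ℕ) : Prop where
  dS_pos : 0 < dS
  dX_pos : 0 < dX
  regS : ∀ m ∈ M, ∀ s : S, (Finset.univ.filter fun x : X => f s x = m).card = dS
  regX : ∀ m ∈ M, ∀ x : X, (Finset.univ.filter fun s : S => f s x = m).card = dX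
  irred : ∀ m ∈ M, lam2 f m dS dX < 1

set_option linter.unusedSectionVars false

namespace Stmt17Aux

open Polynomial Matrix

lemma charpoly_conj {n : Type*} [Fintype n] [DecidableEq n]
    (U D : Matrix n n ℝ) (hU : U ∈ Matrix.unitaryGroup n ℝ) :
    (U * D * star U).charpoly = D.charpoly := by
  have hmap : ∀ A B : Matrix n n ℝ,
      (C : ℝ →+* ℝ[X]).mapMatrix (A * B) =
        (C : ℝ →+* ℝ[X]).mapMatrix A * (C : ℝ →+* ℝ[X]).mapMatrix B := fun A B => map_mul _ _ _
  have hone : (C : ℝ →+* ℝ[X]).mapMatrix (U * star U) = 1 := by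
    rw [Matrix.mem_unitaryGroup_iff.mp hU]; exact map_one _
  have h1 : charmatrix (U * D * star U) =
      (C : ℝ →+* ℝ[X]).mapMatrix U * charmatrix D * (C : ℝ →+* ℝ[X]).mapMatrix (star U) := by
    unfold charmatrix
    rw [mul_sub, sub_mul, ← hmap, ← hmap]
    congr 1
    rw [← (Matrix.scalar_commute (X : ℝ[X]) (fun r' => Commute.all _ _)
      ((C : ℝ →+* ℝ[X]).mapMatrix U)).eq, mul_assoc, ← hmap, hone, mul_one]
  unfold Matrix.charpoly
  rw [h1, Matrix.det_mul_right_comm, ← hmap, hone, one_mul]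

lemma charpoly_diagonal {n : Type*} [Fintype n] [DecidableEq n] (d : n → ℝ) :
    (Matrix.diagonal d).charpoly = ∏ i, (X - C (d i)) := by
  unfold Matrix.charpoly
  have : charmatrix (Matrix.diagonal d) = Matrix.diagonal fun i => X - C (d i) := by
    ext i j
    by_cases h : i = j
    · subst h; simp
    · simp [charmatrix_apply_ne _ _ _ h, Matrix.diagonal_apply_ne _ h]
  rw [this, Matrix.det_diagonal]

lemma roots_charpoly_herm {n : Type*} [Fintype n] [DecidableEq n] {A : Matrix n n ℝ}
    (hA : A.IsHermitian) :
    A.charpoly.roots = Finset.univ.val.map hA.eigenvalues := by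
  have h := hA.spectral_theorem
  have : A.charpoly = (Matrix.diagonal (RCLike.ofReal ∘ hA.eigenvalues)).charpoly := by
    conv_lhs => rw [h]
    exact charpoly_conj _ _ (hA.eigenvectorUnitary).2
  rw [this, charpoly_diagonal]
  have : (∏ i, (X - C ((RCLike.ofReal ∘ hA.eigenvalues : n → ℝ) i))) =
      ((Finset.univ.val.map hA.eigenvalues).map fun a => X - C a).prod := by
    rw [Multiset.map_map]
    rfl
  rw [this, Polynomial.roots_multiset_prod_X_sub_C]

lemma foldr_max_nonneg : ∀ (L : List ℝ), 0 ≤ L.foldr max 0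
  | [] => le_refl 0
  | b :: L => by simpa using Or.inr (foldr_max_nonneg L)

lemma le_foldr_max {a : ℝ} : ∀ {L : List ℝ}, a ∈ L → a ≤ L.foldr max 0
  | b :: L, h => by
    rcases List.mem_cons.mp h with h | h
    · subst h; exact le_max_left _ _
    · exact le_trans (le_foldr_max h) (le_max_right _ _)

lemma secondEVmod_nonneg' {n : Type*} [Fintype n] [DecidableEq n] (P : Matrix n n ℝ) :
    0 ≤ ((P.charpoly.roots.sort (· ≤ ·)).dropLast.map (fun μ => |μ|)).foldr max 0 :=
  foldr_max_nonneg _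

lemma root_abs_le_one {n : Type*} [Fintype n] [DecidableEq n] {A : Matrix n n ℝ}
    (hA : A.IsHermitian) (hnn : ∀ i j, 0 ≤ A i j) (hrow : ∀ i, ∑ j, A i j = 1) :
    ∀ μ ∈ A.charpoly.roots, |μ| ≤ 1 := by
  intro μ hμ
  rw [roots_charpoly_herm hA, Multiset.mem_map] at hμ
  obtain ⟨j, -, rfl⟩ := hμ
  set v : n → ℝ := ⇑(hA.eigenvectorBasis j) with hv
  have hAv : A *ᵥ v = hA.eigenvalues j • v := hA.mulVec_eigenvectorBasis j
  have hvne : v ≠ 0 := by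
    intro h0
    have : hA.eigenvectorBasis j = 0 := by
      ext x
      exact congrFun h0 x
    have hn := hA.eigenvectorBasis.orthonormal.1 j
    rw [this, norm_zero] at hn
    exact one_ne_zero hn.symm
  obtain ⟨x0, -, hx0⟩ := Finset.exists_max_image Finset.univ (fun x => |v x|)
    ⟨j, Finset.mem_univ j⟩
  have hx0ne : 0 < |v x0| := by
    rcases Function.ne_iff.mp hvne with ⟨y, hy⟩
    exact lt_of_lt_of_le (abs_pos.mpr hy) (hx0 y (Finset.mem_univ y))
  have key : |hA.eigenvalues j| * |v x0| ≤ |v x0| := by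
    have h1 : (A *ᵥ v) x0 = hA.eigenvalues j * v x0 := by rw [hAv]; rfl
    calc |hA.eigenvalues j| * |v x0| = |(A *ᵥ v) x0| := by rw [h1, abs_mul]
    _ = |∑ x', A x0 x' * v x'| := by rw [Matrix.mulVec, dotProduct]
    _ ≤ ∑ x', |A x0 x' * v x'| := Finset.abs_sum_le_sum_abs _ _
    _ ≤ ∑ x', A x0 x' * |v x0| := by
        apply Finset.sum_le_sum
        intro x' _
        rw [abs_mul, abs_of_nonneg (hnn x0 x')]
        exact mul_le_mul_of_nonneg_left (hx0 x' (Finset.mem_univ x')) (hnn x0 x')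
    _ = |v x0| := by rw [← Finset.sum_mul, hrow, one_mul]
  exact le_of_mul_le_mul_right (by simpa [mul_comm] using key) hx0ne

lemma trace_le_one_add {n : Type*} [Fintype n] [DecidableEq n] [Nonempty n]
    {A : Matrix n n ℝ} (hA : A.IsHermitian)
    (hroots : ∀ μ ∈ A.charpoly.roots, |μ| ≤ 1) :
    A.trace ≤ 1 + ((Fintype.card n : ℝ) - 1) *
      (((A.charpoly.roots.sort (· ≤ ·)).dropLast.map (fun μ => |μ|)).foldr max 0) := by
  set sE := (((A.charpoly.roots.sort (· ≤ ·)).dropLast.map (fun μ => |μ|)).foldr max 0) with hsE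
  have hcard : A.charpoly.roots.card = Fintype.card n := by
    rw [roots_charpoly_herm hA, Multiset.card_map]
    rfl
  have hsplits : A.charpoly.Splits := by
    rw [Polynomial.splits_iff_card_roots, Matrix.charpoly_natDegree_eq_dim, hcard]
  have htr : A.trace = A.charpoly.roots.sum :=
    Matrix.trace_eq_sum_roots_charpoly_of_splits hsplits
  set l := A.charpoly.roots.sort (· ≤ ·) with hl
  have hlen : l.length = Fintype.card n := by rw [hl, Multiset.length_sort, hcard]
  have hlne : l ≠ [] := by
    intro h
    rw [h] at hlen
    simp at hlen
    exact (Fintype.card_ne_zero) hlen.symm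
  have hsum : A.charpoly.roots.sum = l.sum := by
    conv_lhs => rw [← Multiset.sort_eq A.charpoly.roots (· ≤ ·)]
    rfl
  have hsplit : l.dropLast.sum + l.getLast hlne = l.sum := by
    conv_rhs => rw [← List.dropLast_append_getLast hlne]
    rw [List.sum_append, List.sum_cons, List.sum_nil, add_zero]
  have hlast : l.getLast hlne ≤ 1 := by
    have hmem : l.getLast hlne ∈ A.charpoly.roots := by
      rw [← Multiset.mem_sort (· ≤ ·)]
      exact List.getLast_mem hlne
    exact le_trans (le_abs_self _) (hroots _ hmem)
  have hdrop : l.dropLast.sum ≤ (l.dropLast.length : ℝ) * sE := by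
    have := List.sum_le_card_nsmul l.dropLast sE (fun x hx => by
      refine le_trans (le_abs_self x) (le_foldr_max ?_)
      exact List.mem_map_of_mem hx)
    simpa [nsmul_eq_mul] using this
  have hdl : (l.dropLast.length : ℝ) = (Fintype.card n : ℝ) - 1 := by
    rw [List.length_dropLast, hlen]
    have : 1 ≤ Fintype.card n := Fintype.card_pos
    push_cast [this]
    ring
  rw [htr, hsum, ← hsplit]
  calc l.dropLast.sum + l.getLast hlne ≤ (l.dropLast.length : ℝ) * sE + 1 :=
        add_le_add hdrop hlast
  _ = 1 + ((Fintype.card n : ℝ) - 1) * sE := by rw [hdl]; ring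


section bri
variable {S X N : Type*} [Fintype S] [Fintype X] [DecidableEq X] [DecidableEq N]
  (f : S → X → N) (m : N) (dS dX : ℕ)

lemma briMatrix_herm : (briMatrix f m dS dX).IsHermitian := by
  refine Matrix.IsHermitian.ext fun i j => ?_
  simp only [briMatrix, Matrix.of_apply, RCLike.star_def, starRingEnd_apply, star_trivial]
  congr 2
  exact congrArg Finset.card (Finset.filter_congr fun s _ => and_comm)

lemma briMatrix_nonneg (i j : X) : 0 ≤ briMatrix f m dS dX i j := by
  show (0:ℝ) ≤ ((Finset.univ.filter fun s : S => f s i = m ∧ f s j = m).card : ℝ) / (dS * dX)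
  apply div_nonneg (Nat.cast_nonneg _)
  positivity

lemma briMatrix_cardsum (hS : ∀ s : S, (Finset.univ.filter fun x : X => f s x = m).card = dS)
    (hX : ∀ x : X, (Finset.univ.filter fun s : S => f s x = m).card = dX) (x : X) :
    (∑ x' : X, (Finset.univ.filter fun s : S => f s x = m ∧ f s x' = m).card) = dX * dS := by
  have key : ∀ s : S, (∑ x' : X, if f s x = m ∧ f s x' = m then 1 else 0) =
      if f s x = m then dS else 0 := by
    intro s
    by_cases h : f s x = m
    · simp only [h, true_and, if_true]
      rw [← hS s, Finset.card_filter]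
    · simp [h]
  calc (∑ x' : X, (Finset.univ.filter fun s : S => f s x = m ∧ f s x' = m).card)
      = ∑ x' : X, ∑ s : S, if f s x = m ∧ f s x' = m then 1 else 0 :=
        Finset.sum_congr rfl fun x' _ => Finset.card_filter _ _
    _ = ∑ s : S, ∑ x' : X, if f s x = m ∧ f s x' = m then 1 else 0 := Finset.sum_comm
    _ = ∑ s : S, if f s x = m then dS else 0 := Finset.sum_congr rfl fun s _ => key s
    _ = ∑ s ∈ Finset.univ.filter fun s : S => f s x = m, dS := (Finset.sum_filter _ _).symm
    _ = dX * dS := by rw [Finset.sum_const, hX x, smul_eq_mul]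

lemma briMatrix_rowsum (hdS : 0 < dS) (hdX : 0 < dX)
    (hS : ∀ s : S, (Finset.univ.filter fun x : X => f s x = m).card = dS)
    (hX : ∀ x : X, (Finset.univ.filter fun s : S => f s x = m).card = dX)
    (x : X) : ∑ x', briMatrix f m dS dX x x' = 1 := by
  have : (∑ x', briMatrix f m dS dX x x')
      = (∑ x' : X, ((Finset.univ.filter fun s : S => f s x = m ∧ f s x' = m).card : ℝ)) / (dS * dX) := by
    rw [Finset.sum_div]
    rfl
  rw [this, ← Nat.cast_sum, briMatrix_cardsum f m dS dX hS hX x]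
  push_cast
  rw [mul_comm, div_self]
  positivity

lemma briMatrix_trace (hdS : 0 < dS) (hdX : 0 < dX)
    (hX : ∀ x : X, (Finset.univ.filter fun s : S => f s x = m).card = dX) :
    (briMatrix f m dS dX).trace = (Fintype.card X : ℝ) / dS := by
  have hd : ∀ x : X, briMatrix f m dS dX x x = 1 / dS := by
    intro x
    have h1 : (Finset.univ.filter fun s : S => f s x = m ∧ f s x = m)
        = Finset.univ.filter fun s : S => f s x = m :=
      Finset.filter_congr fun s _ => by rw [and_self]
    show ((Finset.univ.filter fun s : S => f s x = m ∧ f s x = m).card : ℝ) / (dS * dX) = 1 / dS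
    rw [h1, hX x]
    have h2 : (dX:ℝ) ≠ 0 := by positivity
    have h3 : (dS:ℝ) ≠ 0 := by positivity
    field_simp
  unfold Matrix.trace
  simp only [Matrix.diag]
  rw [Finset.sum_congr rfl fun x _ => hd x, Finset.sum_const, Finset.card_univ, nsmul_eq_mul]
  ring

end bri

lemma card_M_mul_dS_le {S X N : Type*} [Fintype S] [Fintype X] [DecidableEq X]
    [DecidableEq N] [Fintype N]
    (f : S → X → N) (Mset : Set N) (dS dX : ℕ) (hdX : 0 < dX)
    (hS : ∀ m ∈ Mset, ∀ s : S, (Finset.univ.filter fun x : X => f s x = m).card = dS)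
    (hXr : ∀ m ∈ Mset, ∀ x : X, (Finset.univ.filter fun s : S => f s x = m).card = dX)
    (m0 : N) (hm0 : m0 ∈ Mset) [Nonempty X] :
    Nat.card Mset * dS ≤ Fintype.card X := by
  classical
  -- get an element of S
  obtain ⟨x0⟩ := ‹Nonempty X›
  have hne : (Finset.univ.filter fun s : S => f s x0 = m0).Nonempty := by
    rw [← Finset.card_pos, hXr m0 hm0 x0]; exact hdX
  obtain ⟨s0, -⟩ := hne
  set F : Finset N := Set.toFinset Mset with hF
  have hcard : Nat.card Mset = F.card := by
    rw [hF, Set.toFinset_card, Nat.card_eq_fintype_card]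
  have hdisj : ∀ m1 ∈ F, ∀ m2 ∈ F, m1 ≠ m2 →
      Disjoint (Finset.univ.filter fun x : X => f s0 x = m1)
        (Finset.univ.filter fun x : X => f s0 x = m2) := by
    intro m1 _ m2 _ hne12
    rw [Finset.disjoint_left]
    intro x hx1 hx2
    rw [Finset.mem_filter] at hx1 hx2
    exact hne12 (hx1.2 ▸ hx2.2 ▸ rfl)
  have := Finset.card_biUnion hdisj
  have hle : (F.biUnion fun m => Finset.univ.filter fun x : X => f s0 x = m).card
      ≤ Fintype.card X := by
    rw [← Finset.card_univ]
    exact Finset.card_le_card (Finset.subset_univ _)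
  rw [this] at hle
  have hsum : (∑ m ∈ F, (Finset.univ.filter fun x : X => f s0 x = m).card) = F.card * dS := by
    rw [Finset.sum_congr rfl fun m hm => hS m (by rwa [hF, Set.mem_toFinset] at hm) s0,
      Finset.sum_const, smul_eq_mul]
  rw [hsum] at hle
  rw [hcard]
  exact hle

lemma logchain {n cM : ℕ} {lam : ℝ} (hlam : 0 ≤ lam) (h : (cM:ℝ) ≤ 1 + ((n:ℝ)-1)*lam)
    (hcM : 2 ≤ cM) (hn : 2 ≤ n) :
    -Real.logb 2 lam ≤ 1 + Real.logb 2 n - Real.logb 2 cM := by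
  have hcM' : (2:ℝ) ≤ (cM:ℝ) := by exact_mod_cast hcM
  have hn' : (2:ℝ) ≤ (n:ℝ) := by exact_mod_cast hn
  have h1 : (cM:ℝ)/2 ≤ (n:ℝ) * lam := by nlinarith
  have hnpos : (0:ℝ) < n := by linarith
  have hlampos : 0 < lam := by nlinarith
  have hq : (cM:ℝ)/(2*n) ≤ lam := by
    rw [div_le_iff₀ (by positivity)]
    nlinarith
  have hqpos : (0:ℝ) < (cM:ℝ)/(2*n) := by positivity
  have hle := Real.logb_le_logb_of_le (b := 2) one_lt_two hqpos hq
  have heq : Real.logb 2 ((cM:ℝ)/(2*n)) = Real.logb 2 cM - (1 + Real.logb 2 n) := by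
    rw [Real.logb_div (by positivity) (by positivity),
      Real.logb_mul (by norm_num) (by positivity), Real.logb_self_eq_one one_lt_two]
  rw [heq] at hle
  linarith

lemma key_bound {S X N : Type*} [Fintype S] [Fintype X] [DecidableEq X]
    [DecidableEq N] [Fintype N] [Nonempty X]
    (f : S → X → N) (Mset : Set N) (dS dX : ℕ)
    (hdS : 0 < dS) (hdX : 0 < dX)
    (hS : ∀ m ∈ Mset, ∀ s : S, (Finset.univ.filter fun x : X => f s x = m).card = dS)
    (hXr : ∀ m ∈ Mset, ∀ x : X, (Finset.univ.filter fun s : S => f s x = m).card = dX)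
    (m0 : N) (hm0 : m0 ∈ Mset) :
    (Nat.card Mset : ℝ) ≤ 1 + ((Fintype.card X : ℝ) - 1) *
      ((((briMatrix f m0 dS dX).charpoly.roots.sort (· ≤ ·)).dropLast.map
          (fun μ => |μ|)).foldr max 0) := by
  have hherm := briMatrix_herm f m0 dS dX
  have htr := briMatrix_trace f m0 dS dX hdS hdX (hXr m0 hm0)
  have hroots := root_abs_le_one hherm (briMatrix_nonneg f m0 dS dX)
    (briMatrix_rowsum f m0 dS dX hdS hdX (hS m0 hm0) (hXr m0 hm0))
  have hle := trace_le_one_add hherm hroots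
  rw [htr] at hle
  refine le_trans ?_ hle
  have hcount := card_M_mul_dS_le f Mset dS dX hdX hS hXr m0 hm0
  rw [le_div_iff₀ (by exact_mod_cast hdS : (0:ℝ) < dS)]
  exact_mod_cast hcount

end Stmt17Aux

/-- **Lemma 7 of the paper.** If a sequence of biregular irreducible
functions satisfies `|X_i| → ∞`, `log|M_i|/log|X_i| → 1 − t` and
`liminf_i (min_{m ∈ M_i}(−log λ₂(f_i,m)))/log|X_i| ≥ t` (in `∀ ε > 0`-eventual form),
then the limit `lim_i (min_{m ∈ M_i}(−log λ₂(f_i,m)))/log|X_i|` exists and equals `t`. -/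
theorem stmt_17 (t : ℝ) (ht0 : 0 ≤ t) (ht1 : t < 1)
    (sS sX sN : ℕ → ℕ) (f : ∀ i, Fin (sS i) → Fin (sX i) → Fin (sN i))
    (M : ∀ i, Set (Fin (sN i))) (dS dX : ℕ → ℕ)
    (hBRI : ∀ i, IsBRI (f i) (M i) (dS i) (dX i))
    (hX : Tendsto (fun i => (sX i : ℝ)) atTop atTop)
    (hrate : Tendsto (fun i => Real.logb 2 (Nat.card (M i)) / Real.logb 2 (sX i)) atTop
      (nhds (1 - t)))
    (hEV : ∀ ε > 0, ∀ᶠ i in atTop,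
      t - ε ≤ sInf ((fun m => -Real.logb 2 (lam2 (f i) m (dS i) (dX i))) '' (M i)) /
        Real.logb 2 (sX i)) :
    Tendsto
      (fun i => sInf ((fun m => -Real.logb 2 (lam2 (f i) m (dS i) (dX i))) '' (M i)) /
        Real.logb 2 (sX i))
      atTop (nhds t) := by
  classical
  have h1t : 0 < 1 - t := by linarith
  set L : ℕ → ℝ := fun i => Real.logb 2 (sX i) with hLdef
  set q : ℕ → ℝ := fun i =>
    sInf ((fun m => -Real.logb 2 (lam2 (f i) m (dS i) (dX i))) '' (M i)) / L i with hqdef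
  show Tendsto q atTop (nhds t)
  have hL : Tendsto L atTop atTop :=
    (Real.tendsto_logb_atTop one_lt_two).comp hX
  -- the auxiliary upper-bound sequence
  set g : ℕ → ℝ := fun i => (1 + L i - Real.logb 2 (Nat.card (M i))) / L i with hgdef
  have hg : Tendsto g atTop (nhds t) := by
    have hh : Tendsto (fun i => (L i)⁻¹ + 1 - Real.logb 2 (Nat.card (M i)) / L i) atTop
        (nhds (0 + 1 - (1 - t))) := by
      exact ((hL.inv_tendsto_atTop.add tendsto_const_nhds).sub hrate)
    have : (0:ℝ) + 1 - (1 - t) = t := by ring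
    rw [this] at hh
    refine Tendsto.congr' ?_ hh
    filter_upwards [hL.eventually_gt_atTop 0] with i hLi
    rw [hgdef]
    field_simp
  -- eventually 2 ≤ Nat.card (M i)
  have hM2 : ∀ᶠ i in atTop, 2 ≤ Nat.card (M i) := by
    have hr2 : ∀ᶠ i in atTop,
        (1 - t)/2 < Real.logb 2 (Nat.card (M i)) / L i :=
      hrate.eventually (eventually_gt_nhds (by linarith))
    have hL2 : ∀ᶠ i in atTop, 2 / ((1 - t)/2) < L i := hL.eventually_gt_atTop _
    filter_upwards [hr2, hL2] with i h1 h2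
    have hdpos : (0:ℝ) < (1 - t)/2 := by linarith
    have hLpos : 0 < L i := lt_trans (by positivity) h2
    have hgt : (2:ℝ) < Real.logb 2 (Nat.card (M i)) := by
      have hm := mul_lt_mul'' h1 h2 (le_of_lt hdpos) (by positivity)
      rw [div_mul_cancel₀ _ (ne_of_gt hLpos)] at hm
      have he : (1 - t)/2 * (2 / ((1 - t)/2)) = 2 := by
        field_simp
      linarith
    by_contra hlt
    push_neg at hlt
    interval_cases h : Nat.card (M i) <;> simp_all <;> norm_num at hgt
  -- eventually q i ≤ g i
  have hub : ∀ᶠ i in atTop, q i ≤ g i := by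
    filter_upwards [hM2, hX.eventually_ge_atTop 2, hL.eventually_gt_atTop 0]
      with i hMi hXi hLi
    have hsX2 : 2 ≤ sX i := by exact_mod_cast hXi
    have : Nonempty (Fin (sX i)) := ⟨⟨0, by omega⟩⟩
    have hMne : ∃ m0, m0 ∈ M i := by
      have hpos : 0 < Nat.card (M i) := by omega
      rw [Nat.card_pos_iff] at hpos
      obtain ⟨⟨m0, hm0⟩⟩ := hpos.1
      exact ⟨m0, hm0⟩
    obtain ⟨m0, hm0⟩ := hMne
    set T := ((fun m => -Real.logb 2 (lam2 (f i) m (dS i) (dX i))) '' (M i)) with hT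
    have hTfin : T.Finite := (Set.toFinite (M i)).image _
    have hsInf : sInf T ≤ -Real.logb 2 (lam2 (f i) m0 (dS i) (dX i)) :=
      csInf_le hTfin.bddBelow ⟨m0, hm0, rfl⟩
    have hkey : (Nat.card (M i) : ℝ) ≤ 1 + ((sX i : ℝ) - 1) * lam2 (f i) m0 (dS i) (dX i) := by
      have := Stmt17Aux.key_bound (f i) (M i) (dS i) (dX i) (hBRI i).dS_pos (hBRI i).dX_pos
        (hBRI i).regS (hBRI i).regX m0 hm0
      rw [Fintype.card_fin] at this
      exact this
    have hlamnn : 0 ≤ lam2 (f i) m0 (dS i) (dX i) := Stmt17Aux.foldr_max_nonneg _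
    have hchain : -Real.logb 2 (lam2 (f i) m0 (dS i) (dX i)) ≤
        1 + L i - Real.logb 2 (Nat.card (M i)) :=
      Stmt17Aux.logchain hlamnn hkey hMi hsX2
    have hnum : sInf T ≤ 1 + L i - Real.logb 2 (Nat.card (M i)) := le_trans hsInf hchain
    exact div_le_div_of_nonneg_right hnum hLi.le
  -- conclude by epsilon argument
  rw [Metric.tendsto_nhds]
  intro ε hε
  have hlow := hEV (ε/2) (by linarith)
  have hgub : ∀ᶠ i in atTop, dist (g i) t < ε/2 := (Metric.tendsto_nhds.mp hg) (ε/2) (by linarith)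
  filter_upwards [hlow, hgub, hub] with i h1 h2 h3
  rw [Real.dist_eq, abs_sub_lt_iff]
  rw [Real.dist_eq, abs_sub_lt_iff] at h2
  constructor
  · have : q i ≤ g i := h3
    linarith [h2.1]
  · have : t - ε/2 ≤ q i := h1
    linarith

end
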